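/- (Prefix matching) Fix a perfect matching M of bipartite graph G(U,V;E) and permutations σ, π. For any k, let V_[k] be the first k vertices of V under π and U_[k] their M-partners. If exactly ℓ vertices of V_[k] are matched by the greedy matching M[σ,π] to vertices in U \ U_[k], then at least ℓ + (k-ℓ)/2 vertices of V_[k] are matched in M[σ,π]. -/

import Mathlib

/-- Auxiliary greedy process: process the list of left vertices in order; each is
matched to its unmatched neighbor of lowest rank under `π` (if any). -/
def greedyAux {U V : Type*} [Fintype V] [DecidableEq V] {n : ℕ}
    (E : U → V → Bool) (π : V ≃ Fin n) :
    List U → Finset V → List (U × V)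
  | [], _ => []
  | u :: us, matched =>
    let cand := (Finset.univ.filter (fun v => E u v = true ∧ v ∉ matched)).image π
    if h : cand.Nonempty then
      (u, π.symm (cand.min' h)) :: greedyAux E π us (insert (π.symm (cand.min' h)) matched)
    else
      greedyAux E π us matched

/-- The greedy matching `M[σ,π]`: vertices of `U` arrive in the order given by `σ`,
each matched to its lowest-ranked (under `π`) yet-unmatched neighbor. -/
def greedy {U V : Type*} [Fintype V] [DecidableEq V] {m n : ℕ}
    (E : U → V → Bool) (σ : U ≃ Fin m) (π : V ≃ Fin n) : List (U × V) :=
  greedyAux E π ((List.finRange m).map σ.symm) ∅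

section Aux

variable {U V : Type*} [Fintype V] [DecidableEq V] {n : ℕ}

/-- The first components of the greedy output form a sublist of the input order. -/
lemma greedyAux_fst_sublist (E : U → V → Bool) (π : V ≃ Fin n) :
    ∀ (us : List U) (M : Finset V),
      ((greedyAux E π us M).map Prod.fst).Sublist us
  | [], M => by simp [greedyAux]
  | u :: us, M => by
    rw [greedyAux]
    split
    · simpa using (greedyAux_fst_sublist E π us _).cons₂ u
    · exact (greedyAux_fst_sublist E π us M).cons u

/-- If `v` is never matched by the greedy process (and was not initially matched),
then every processed neighbor `u` of `v` gets matched, to a vertex of rank at most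
that of `v`. -/
lemma greedyAux_exists (E : U → V → Bool) (π : V ≃ Fin n) :
    ∀ (us : List U) (M : Finset V) (u : U) (v : V),
      u ∈ us → E u v = true → v ∉ M →
      v ∉ (greedyAux E π us M).map Prod.snd →
      ∃ w, (u, w) ∈ greedyAux E π us M ∧ π w ≤ π v
  | [], M, u, v => by simp
  | u0 :: us, M, u, v => by
    intro hu hE hvM hvout
    by_cases h0 : u0 = u
    · subst h0
      have hmem : π v ∈ (Finset.univ.filter (fun x => E u0 x = true ∧ x ∉ M)).image π :=
        Finset.mem_image_of_mem _ (by simp [hE, hvM])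
      have hne : ((Finset.univ.filter (fun x => E u0 x = true ∧ x ∉ M)).image π).Nonempty :=
        ⟨_, hmem⟩
      refine ⟨π.symm (((Finset.univ.filter (fun x => E u0 x = true ∧ x ∉ M)).image π).min' hne),
        ?_, ?_⟩
      · rw [greedyAux, dif_pos hne]
        exact List.mem_cons_self
      · simpa using Finset.min'_le _ _ hmem
    · have hu' : u ∈ us := by
        rcases List.mem_cons.mp hu with h | h
        · exact absurd h.symm h0
        · exact h
      rw [greedyAux] at hvout ⊢
      by_cases hne : ((Finset.univ.filter fun x => E u0 x = true ∧ x ∉ M).image π).Nonempty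
      · rw [dif_pos hne] at hvout ⊢
        simp only [List.map_cons, List.mem_cons] at hvout
        push_neg at hvout
        obtain ⟨hv1, hv2⟩ := hvout
        have hvM' : v ∉ insert (π.symm (((Finset.univ.filter
            fun x => E u0 x = true ∧ x ∉ M).image π).min' hne)) M := by
          simp only [Finset.mem_insert]
          push_neg
          exact ⟨hv1, hvM⟩
        obtain ⟨w, hw, hle⟩ := greedyAux_exists E π us _ u v hu' hE hvM' hv2
        exact ⟨w, List.mem_cons_of_mem _ hw, hle⟩
      · rw [dif_neg hne] at hvout ⊢
        exact greedyAux_exists E π us M u v hu' hE hvM hvout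

end Aux

lemma length_filter_split {α} (l : List α) (p q : α → Prop)
    [DecidablePred p] [DecidablePred q] :
    (l.filter fun a => decide (p a ∧ q a)).length
      + (l.filter fun a => decide (p a ∧ ¬ q a)).length
      = (l.filter fun a => decide (p a)).length := by
  induction l with
  | nil => simp
  | cons a l ih =>
    by_cases hp : p a <;> by_cases hq : q a <;>
      simp [List.filter_cons, hp, hq, ← ih] <;> omega

lemma card_pi_lt (n k : ℕ) (hk : k ≤ n) (π : Equiv.Perm (Fin n)) :
    (Finset.univ.filter fun v : Fin n => (π v : ℕ) < k).card = k := by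
  have h1 : (Finset.univ.filter fun v : Fin n => (π v : ℕ) < k) =
      (Finset.univ.filter fun w : Fin n => (w : ℕ) < k).map π.symm.toEmbedding := by
    ext v
    simp only [Finset.mem_filter, Finset.mem_univ, true_and, Finset.mem_map,
      Equiv.coe_toEmbedding]
    constructor
    · intro h; exact ⟨π v, h, π.symm_apply_apply v⟩
    · rintro ⟨w, hw, rfl⟩; simpa using hw
  rw [h1, Finset.card_map]
  have : (Finset.univ.filter fun w : Fin n => (w : ℕ) < k) =
      (Finset.range k).attachFin (fun m hm => lt_of_lt_of_le (Finset.mem_range.mp hm) hk) := by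
    ext w
    simp [Finset.mem_attachFin]
  rw [this, Finset.card_attachFin, Finset.card_range]

/-- Prefix matching: fix a perfect matching (given by `μ`, where `μ v` is the
`M`-partner of `v`). For any `k`, if exactly `ℓ` of the first `k` vertices of `V`
under `π` are matched by the greedy matching to vertices outside `U_[k]`, then at
least `ℓ + (k-ℓ)/2` of them are matched (stated as `k + ℓ ≤ 2·matched`). -/
theorem prefix_matching (n k ℓ : ℕ) (hk : k ≤ n)
    (E : Fin n → Fin n → Bool)
    (σ π : Equiv.Perm (Fin n)) (μ : Equiv.Perm (Fin n))
    (hμ : ∀ v, E (μ v) v = true)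
    (hl : ((greedy E σ π).filter
        (fun p => decide (((π p.2 : ℕ) < k) ∧ k ≤ (π (μ.symm p.1) : ℕ)))).length = ℓ) :
    k + ℓ ≤ 2 * ((greedy E σ π).filter (fun p => decide ((π p.2 : ℕ) < k))).length := by
  classical
  set L := greedy E σ π with hL
  set m := (L.filter (fun p => decide ((π p.2 : ℕ) < k))).length with hm
  set insL := L.filter (fun p =>
    decide (((π p.2 : ℕ) < k) ∧ ¬ k ≤ (π (μ.symm p.1) : ℕ))) with hinsL
  -- (3) : ℓ + insL.length = m
  have h3 : ℓ + insL.length = m := by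
    rw [← hl, hm, hinsL]
    exact length_filter_split L (fun p => (π p.2 : ℕ) < k)
      (fun p => k ≤ (π (μ.symm p.1) : ℕ))
  -- nodup facts
  have hndL : L.Nodup := by
    have h1 : ((List.finRange n).map σ.symm).Nodup :=
      (List.nodup_finRange n).map σ.symm.injective
    have h2 : (L.map Prod.fst).Nodup :=
      (greedyAux_fst_sublist E π _ _).nodup h1
    exact h2.of_map
  have hndins : insL.Nodup := hndL.filter _
  -- key existence
  have key : ∀ v : Fin n, (π v : ℕ) < k → v ∉ L.map Prod.snd →
      ∃ w, (μ v, w) ∈ L ∧ (π w : ℕ) < k := by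
    intro v hv hvm
    have humem : μ v ∈ (List.finRange n).map σ.symm :=
      List.mem_map.mpr ⟨σ (μ v), List.mem_finRange _, by simp⟩
    obtain ⟨w, hw, hle⟩ :=
      greedyAux_exists E π ((List.finRange n).map σ.symm) ∅ (μ v) v humem (hμ v)
        (by simp) hvm
    exact ⟨w, hw, lt_of_le_of_lt (by exact_mod_cast hle) hv⟩
  -- the set of unmatched vertices of V_[k]
  set T := Finset.univ.filter
    (fun v : Fin n => (π v : ℕ) < k ∧ v ∉ L.map Prod.snd) with hT
  -- (2) : T.card ≤ insL.length
  have h2 : T.card ≤ insL.length := by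
    have hfun : ∀ v ∈ T, ∃ w, (μ v, w) ∈ L ∧ (π w : ℕ) < k := by
      intro v hv
      rw [hT, Finset.mem_filter] at hv
      exact key v hv.2.1 hv.2.2
    set f : Fin n → Fin n × Fin n := fun v =>
      if h : ∃ w, (μ v, w) ∈ L ∧ (π w : ℕ) < k then (μ v, h.choose) else (μ v, v) with hf
    have hmaps : ∀ v ∈ T, f v ∈ insL.toFinset := by
      intro v hv
      have h := hfun v hv
      rw [hf]
      simp only [dif_pos h]
      obtain ⟨hw1, hw2⟩ := h.choose_spec
      rw [List.mem_toFinset, hinsL, List.mem_filter]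
      refine ⟨hw1, ?_⟩
      have hπv : (π v : ℕ) < k := by
        rw [hT, Finset.mem_filter] at hv; exact hv.2.1
      simp only [decide_eq_true_eq]
      exact ⟨hw2, by simpa using Nat.not_le.mpr hπv⟩
    have hinj : Set.InjOn f T := by
      intro v1 h1 v2 h2 heq
      have hfst : ∀ v : Fin n, (f v).1 = μ v := by
        intro v
        by_cases h : ∃ w, (μ v, w) ∈ L ∧ (π w : ℕ) < k
        · simp only [hf, dif_pos h]
        · simp only [hf, dif_neg h]
      have : (f v1).1 = (f v2).1 := by rw [heq]
      rw [hfst, hfst] at this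
      exact μ.injective this
    calc T.card ≤ insL.toFinset.card := Finset.card_le_card_of_injOn f hmaps hinj
      _ = insL.length := by rw [List.toFinset_card_of_nodup hndins]
  -- (1) : k ≤ m + T.card
  have h1 : k ≤ m + T.card := by
    have hsplit : (Finset.univ.filter fun v : Fin n => (π v : ℕ) < k) ⊆
        ((L.filter (fun p => decide ((π p.2 : ℕ) < k))).map Prod.snd).toFinset ∪ T := by
      intro v hv
      rw [Finset.mem_filter] at hv
      by_cases hvm : v ∈ L.map Prod.snd
      · apply Finset.mem_union_left
        rw [List.mem_toFinset, List.mem_map]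
        obtain ⟨p, hp, hpv⟩ := List.mem_map.mp hvm
        refine ⟨p, List.mem_filter.mpr ⟨hp, ?_⟩, hpv⟩
        simp [hpv, hv.2]
      · exact Finset.mem_union_right _
          (Finset.mem_filter.mpr ⟨Finset.mem_univ _, hv.2, hvm⟩)
    have := Finset.card_le_card hsplit
    rw [card_pi_lt n k hk π] at this
    calc k ≤ (((L.filter (fun p => decide ((π p.2 : ℕ) < k))).map Prod.snd).toFinset ∪ T).card :=
        this
      _ ≤ ((L.filter (fun p => decide ((π p.2 : ℕ) < k))).map Prod.snd).toFinset.card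
          + T.card := Finset.card_union_le _ _
      _ ≤ m + T.card := by
          gcongr
          calc ((L.filter (fun p => decide ((π p.2 : ℕ) < k))).map Prod.snd).toFinset.card
              ≤ ((L.filter (fun p => decide ((π p.2 : ℕ) < k))).map Prod.snd).length :=
                List.toFinset_card_le _
            _ = m := by rw [List.length_map]
  omega
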